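/- With λ, Δ, S, C, P_d as defined, the function P_d is monotone nondecreasing on the interval [0, Δ] (so that P_d is a genuine cumulative distribution function of the steady-state vehicle delay). -/

import Mathlib

open Real

set_option maxHeartbeats 1000000 in
/-- The steady-state cumulative distribution of vehicle delay `P_d` from
Proposition 1 of the paper is monotone nondecreasing on `[0, Δ]`, so it is a
genuine cumulative distribution function. -/
theorem Pd_monotoneOn
    (lam Δ S C : ℝ) (P : ℝ → ℝ) (hlam : 0 < lam) (hΔ : 0 < Δ)
    (hS : S = Real.exp (lam * Δ / 2) + Real.exp (-(lam * Δ) / 2) - 1)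
    (hC : C = lam * (1 + Real.exp (-(lam * Δ))) / (8 * S))
    (hP : ∀ t ∈ Set.Icc (0 : ℝ) Δ,
      P t = (4 * C / lam) *
          (Real.exp (lam * t / 2) - Real.exp (lam * (Δ - t) / 2) +
            Real.exp (lam * Δ / 2 - lam * t)) +
        (1 - Real.exp (-(lam * t))) / 2) :
    MonotoneOn P (Set.Icc (0 : ℝ) Δ) := by
  set f : ℝ → ℝ := fun t => (4 * C / lam) *
      (Real.exp (lam * t / 2) - Real.exp (lam * (Δ - t) / 2) +
        Real.exp (lam * Δ / 2 - lam * t)) +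
      (1 - Real.exp (-(lam * t))) / 2 with hf
  set D : ℝ → ℝ := fun t => (4 * C / lam) *
      (Real.exp (lam * t / 2) * (lam / 2) + Real.exp (lam * (Δ - t) / 2) * (lam / 2)
        - Real.exp (lam * Δ / 2 - lam * t) * lam) +
      Real.exp (-(lam * t)) * lam / 2 with hD
  have hder : ∀ t : ℝ, HasDerivAt f (D t) t := by
    intro t
    have l1 : HasDerivAt (fun t : ℝ => lam * t / 2) (lam / 2) t := by
      simpa using ((hasDerivAt_id t).const_mul lam).div_const 2
    have l2 : HasDerivAt (fun t : ℝ => lam * (Δ - t) / 2) (-(lam / 2)) t := by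
      have : HasDerivAt (fun t : ℝ => Δ - t) (-1) t := by
        simpa using (hasDerivAt_id t).const_sub Δ
      simpa [mul_comm, mul_assoc, neg_div] using (this.const_mul lam).div_const 2
    have l3 : HasDerivAt (fun t : ℝ => lam * Δ / 2 - lam * t) (-lam) t := by
      have : HasDerivAt (fun t : ℝ => lam * t) lam t := by
        simpa using (hasDerivAt_id t).const_mul lam
      simpa using this.const_sub (lam * Δ / 2)
    have l4 : HasDerivAt (fun t : ℝ => -(lam * t)) (-lam) t := by
      have : HasDerivAt (fun t : ℝ => lam * t) lam t := by
        simpa using (hasDerivAt_id t).const_mul lam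
      exact this.neg
    have h1 := l1.exp
    have h2 := l2.exp
    have h3 := l3.exp
    have h4 := l4.exp
    have := (((h1.sub h2).add h3).const_mul (4 * C / lam)).add
      (((hasDerivAt_const t (1:ℝ)).sub h4).div_const 2)
    refine this.congr_deriv ?_
    simp only [hD]
    ring
  have hy1 : (1:ℝ) < Real.exp (lam * Δ / 2) := by
    rw [show (1:ℝ) = Real.exp 0 by simp]
    exact Real.exp_lt_exp.mpr (by positivity)
  have hSpos : 0 < S := by
    have := Real.exp_pos (-(lam * Δ) / 2)
    rw [hS]; linarith
  have hCpos : 0 < C := by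
    rw [hC]
    have := Real.exp_pos (-(lam * Δ))
    positivity
  have hmono : MonotoneOn f (Set.Icc 0 Δ) := by
    apply monotoneOn_of_deriv_nonneg (convex_Icc 0 Δ)
    · exact Continuous.continuousOn (by fun_prop)
    · intro t ht
      exact (hder t).differentiableAt.differentiableWithinAt
    · intro t ht
      rw [interior_Icc] at ht
      rw [(hder t).deriv]
      simp only [hD]
      set x := Real.exp (lam * t / 2) with hx
      set y := Real.exp (lam * Δ / 2) with hyy
      have hxpos : 0 < x := Real.exp_pos _
      have hypos : 0 < y := Real.exp_pos _
      have hx1 : 1 ≤ x := by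
        rw [hx, show (1:ℝ) = Real.exp 0 by simp]
        exact Real.exp_le_exp.mpr (by nlinarith [ht.1])
      have hxy : x ≤ y := by
        rw [hx, hyy]
        exact Real.exp_le_exp.mpr (by nlinarith [ht.2])
      have hx2 : x ^ 2 = Real.exp (lam * t) := by
        rw [hx, sq, ← Real.exp_add]; ring_nf
      have hy2 : y ^ 2 = Real.exp (lam * Δ) := by
        rw [hyy, sq, ← Real.exp_add]; ring_nf
      have e1 : Real.exp (lam * (Δ - t) / 2) = y / x := by
        rw [hx, hyy, ← Real.exp_sub]; ring_nf
      have e2 : Real.exp (lam * Δ / 2 - lam * t) = y / x ^ 2 := by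
        rw [Real.exp_sub, ← hyy, ← hx2]
      have e3 : Real.exp (-(lam * t)) = 1 / x ^ 2 := by
        rw [Real.exp_neg, ← hx2, one_div]
      have e4 : Real.exp (-(lam * Δ) / 2) = 1 / y := by
        rw [show -(lam * Δ) / 2 = -(lam * Δ / 2) by ring, Real.exp_neg, ← hyy, one_div]
      have e5 : Real.exp (-(lam * Δ)) = 1 / y ^ 2 := by
        rw [Real.exp_neg, ← hy2, one_div]
      have hy1 : (1:ℝ) < y := lt_of_lt_of_le (by
        rw [hx, show (1:ℝ) = Real.exp 0 by simp]
        exact Real.exp_lt_exp.mpr (by nlinarith [ht.1])) hxy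
      have hden : 0 < y ^ 2 - y + 1 := by nlinarith
      have hCval : C = lam * (y ^ 2 + 1) / (8 * y * (y ^ 2 - y + 1)) := by
        rw [hC, hS, e4, e5, div_eq_div_iff
          (by have := one_div_pos.mpr hypos; nlinarith) (by positivity)]
        field_simp
        ring
      rw [e1, e2, e3, hCval]
      have hx3 : 1 ≤ x ^ 3 := by nlinarith
      have key : 0 ≤ (y ^ 2 + 1) * (x ^ 3 + x * y - 2 * y) + 2 * y * (y ^ 2 - y + 1) := by
        have h1 : 1 - y ≤ x ^ 3 + x * y - 2 * y := by nlinarith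
        have h2 : (y ^ 2 + 1) * (1 - y) ≤ (y ^ 2 + 1) * (x ^ 3 + x * y - 2 * y) :=
          mul_le_mul_of_nonneg_left h1 (by positivity)
        nlinarith [mul_nonneg (sub_nonneg.2 hy1.le) (sq_nonneg y)]
      have goal2 : (0:ℝ) ≤ lam * ((y ^ 2 + 1) * (x ^ 3 + x * y - 2 * y)
          + 2 * y * (y ^ 2 - y + 1)) / (4 * x ^ 2 * y * (y ^ 2 - y + 1)) :=
        div_nonneg (mul_nonneg hlam.le key) (by positivity)
      convert goal2 using 1
      have hden' : y ^ 2 - y + 1 ≠ 0 := hden.ne'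
      have hden'' : y * (y - 1) + 1 ≠ 0 := by nlinarith
      field_simp
      ring
  intro a ha b hb hab
  rw [hP a ha, hP b hb]
  exact hmono ha hb hab
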